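/- Let k = p^a q^b l with gcd(l, pq) = 1, 0 ≤ a ≤ m−1, 0 ≤ b ≤ n−1, and set ζ_q = β^{p^{m+a} q^{n−1}} (a primitive q-th root of unity). Then for all 1 ≤ j ≤ n: S_0^{(0,j)}(β^k) = q^{j−1}(q−1)/2 (as an element of F_{4^{d*}}) if j ≤ b; S_0^{(0,j)}(β^k) = Σ_{t ∈ D_0^{(q)}} ζ_q^{lt} if j = b+1; and S_0^{(0,j)}(β^k) = 0 if j > b+1. -/

import Mathlib

open Finset Polynomial

noncomputable section

/-- The field `F₄` with four elements. -/
abbrev F4 : Type := GaloisField 2 2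

/-- Generic generalized cyclotomic class of index `0` modulo `M`:
`{ g^(2t) * y^k mod M : 0 ≤ t < dHalf, 0 ≤ k < e }`. -/
def GC0 (g y M dHalf e : ℕ) : Finset ℕ :=
  ((Finset.range dHalf) ×ˢ (Finset.range e)).image
    (fun tk => g ^ (2 * tk.1) * y ^ tk.2 % M)

/-- Generic generalized cyclotomic class of index `1` modulo `M`: `g · GC0 (mod M)`. -/
def GC1 (g y M dHalf e : ℕ) : Finset ℕ :=
  (GC0 g y M dHalf e).image (fun x => g * x % M)

/-- Class of index `h ∈ {0,1}`. -/
def GC (h g y M dHalf e : ℕ) : Finset ℕ :=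
  if h = 0 then GC0 g y M dHalf e else GC1 g y M dHalf e

/-- `e_{i,j} = gcd(p^{i-1}(p-1), q^{j-1}(q-1))`. -/
def eij (p q i j : ℕ) : ℕ := Nat.gcd (p ^ (i - 1) * (p - 1)) (q ^ (j - 1) * (q - 1))

/-- `d_{i,j} = p^{i-1}(p-1) q^{j-1}(q-1) / e_{i,j}`. -/
def dij (p q i j : ℕ) : ℕ := p ^ (i - 1) * (p - 1) * (q ^ (j - 1) * (q - 1)) / eij p q i j

/-- `D_h^{(p^i q^j)}`. -/
def DPQ (p q g y h i j : ℕ) : Finset ℕ :=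
  GC h g y (p ^ i * q ^ j) (dij p q i j / 2) (eij p q i j)

/-- `D_h^{(2 p^i q^j)}`. -/
def D2PQ (p q g y h i j : ℕ) : Finset ℕ :=
  GC h g y (2 * (p ^ i * q ^ j)) (dij p q i j / 2) (eij p q i j)

/-- `D_h^{(p^i)}`. -/
def DP (p g h i : ℕ) : Finset ℕ := GC h g 1 (p ^ i) (p ^ (i - 1) * (p - 1) / 2) 1

/-- `D_h^{(2p^i)}`. -/
def D2P (p g h i : ℕ) : Finset ℕ := GC h g 1 (2 * p ^ i) (p ^ (i - 1) * (p - 1) / 2) 1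

/-- `D_h^{(q^j)}`. -/
def DQ (q g h j : ℕ) : Finset ℕ := GC h g 1 (q ^ j) (q ^ (j - 1) * (q - 1) / 2) 1

/-- `D_h^{(2q^j)}`. -/
def D2Q (q g h j : ℕ) : Finset ℕ := GC h g 1 (2 * q ^ j) (q ^ (j - 1) * (q - 1) / 2) 1

/-- `c · A`. -/
def scaled (c : ℕ) (A : Finset ℕ) : Finset ℕ := A.image (fun x => c * x)

/-- `H_h^{(p^i q^j)} = p^{m-i} q^{n-j} D_h^{(p^i q^j)}`. -/
def HPQ (p q m n g y h i j : ℕ) : Finset ℕ :=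
  scaled (p ^ (m - i) * q ^ (n - j)) (DPQ p q g y h i j)

/-- `H_h^{(2 p^i q^j)} = p^{m-i} q^{n-j} D_h^{(2 p^i q^j)}`. -/
def H2PQ (p q m n g y h i j : ℕ) : Finset ℕ :=
  scaled (p ^ (m - i) * q ^ (n - j)) (D2PQ p q g y h i j)

/-- `H_h^{(p^i)} = p^{m-i} q^n D_h^{(p^i)}`. -/
def HP (p q m n g h i : ℕ) : Finset ℕ := scaled (p ^ (m - i) * q ^ n) (DP p g h i)

/-- `H_h^{(2p^i)} = p^{m-i} q^n D_h^{(2p^i)}`. -/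
def H2P (p q m n g h i : ℕ) : Finset ℕ := scaled (p ^ (m - i) * q ^ n) (D2P p g h i)

/-- `H_h^{(q^j)} = p^m q^{n-j} D_h^{(q^j)}`. -/
def HQ (p q m n g h j : ℕ) : Finset ℕ := scaled (p ^ m * q ^ (n - j)) (DQ q g h j)

/-- `H_h^{(2q^j)} = p^m q^{n-j} D_h^{(2q^j)}`. -/
def H2Q (p q m n g h j : ℕ) : Finset ℕ := scaled (p ^ m * q ^ (n - j)) (D2Q q g h j)

/-- `⋃_{i,j} H_h^{(2p^i q^j)} ∪ ⋃_i H_h^{(2p^i)} ∪ ⋃_j H_h^{(2q^j)}`. -/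
def UnionH (p q m n g y h : ℕ) : Finset ℕ :=
  ((Finset.Icc 1 m).biUnion fun i => (Finset.Icc 1 n).biUnion fun j => H2PQ p q m n g y h i j)
    ∪ ((Finset.Icc 1 m).biUnion fun i => H2P p q m n g h i)
    ∪ ((Finset.Icc 1 n).biUnion fun j => H2Q p q m n g h j)

/-- `⋃_{i,j} 2H_h^{(p^i q^j)} ∪ ⋃_i 2H_h^{(p^i)} ∪ ⋃_j 2H_h^{(q^j)}`. -/
def Union2H (p q m n g y h : ℕ) : Finset ℕ :=
  ((Finset.Icc 1 m).biUnion fun i =>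
      (Finset.Icc 1 n).biUnion fun j => scaled 2 (HPQ p q m n g y h i j))
    ∪ ((Finset.Icc 1 m).biUnion fun i => scaled 2 (HP p q m n g h i))
    ∪ ((Finset.Icc 1 n).biUnion fun j => scaled 2 (HQ p q m n g h j))

/-- The quaternary generalized cyclotomic sequence of period `2 p^m q^n`. -/
def seqS (p q m n g y : ℕ) (a b c d e : F4) (u : ℕ) : F4 :=
  let v := u % (2 * (p ^ m * q ^ n))
  if v = 0 then 0
  else if v = p ^ m * q ^ n then e
  else if v ∈ UnionH p q m n g y 0 then a
  else if v ∈ UnionH p q m n g y 1 then b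
  else if v ∈ Union2H p q m n g y 0 then c
  else if v ∈ Union2H p q m n g y 1 then d
  else 0

/-- The generating polynomial `S(x) = ∑_{u=0}^{2p^m q^n - 1} s_u x^u ∈ F₄[x]`. -/
def genPoly (p q m n g y : ℕ) (a b c d e : F4) : Polynomial F4 :=
  ∑ u ∈ Finset.range (2 * (p ^ m * q ^ n)),
    Polynomial.C (seqS p q m n g y a b c d e u) * Polynomial.X ^ u

/-- The linear complexity of a sequence over a field: the least `L > 0` admitting a linear
recurrence `s_{u+L} = c_1 s_{u+L-1} + ⋯ + c_L s_u`. -/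
def LinearComplexity {F : Type*} [Field F] (s : ℕ → F) : ℕ :=
  sInf {L | 0 < L ∧ ∃ c : Fin L → F,
    ∀ u, s (u + L) = ∑ i : Fin L, c i * s (u + L - 1 - (i : ℕ))}

/- ======================= helper lemmas ======================= -/

lemma pow_mod_eq_pow' {K : Type*} [Field K] {ζ : K} {M : ℕ} (h : ζ ^ M = 1) (x : ℕ) :
    ζ ^ (x % M) = ζ ^ x := by
  conv_rhs => rw [← Nat.div_add_mod x M]
  rw [pow_add, pow_mul, h, one_pow, one_mul]

lemma pow_eq_of_modEq' {K : Type*} [Field K] {ζ : K} {M : ℕ} (h : ζ ^ M = 1) {x y : ℕ}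
    (hxy : x ≡ y [MOD M]) : ζ ^ x = ζ ^ y := by
  rw [← pow_mod_eq_pow' h x, ← pow_mod_eq_pow' h y]
  exact congrArg _ hxy

lemma sum_range_mul_split {M : Type*} [AddCommMonoid M] (f : ℕ → M) (a P : ℕ) :
    ∑ t ∈ Finset.range (a * P), f t
      = ∑ c ∈ Finset.range a, ∑ r ∈ Finset.range P, f (c * P + r) := by
  induction a with
  | zero => simp
  | succ a ih =>
      rw [Finset.sum_range_succ, ← ih, Nat.succ_mul, Finset.range_eq_Ico,
        ← Finset.sum_Ico_consecutive f (Nat.zero_le _) (Nat.le_add_right _ P)]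
      congr 1
      all_goals rw [Finset.sum_Ico_eq_sum_range]
      all_goals simp only [Nat.sub_zero, zero_add, Nat.add_sub_cancel_left]

lemma binom_modEq' (x M : ℕ) (hM : M ∣ x ^ 2) (c : ℕ) :
    (1 + x) ^ c ≡ 1 + c * x [MOD M] := by
  induction c with
  | zero => simp [Nat.ModEq.refl]
  | succ c ih =>
      calc (1 + x) ^ (c + 1) = (1 + x) ^ c * (1 + x) := by ring
        _ ≡ (1 + c * x) * (1 + x) [MOD M] := ih.mul_right _
        _ = (1 + (c + 1) * x) + c * x ^ 2 := by ring
        _ ≡ (1 + (c + 1) * x) + c * 0 [MOD M] :=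
            Nat.ModEq.add_left _ ((Nat.modEq_zero_iff_dvd.mpr hM).mul_left c)
        _ = 1 + (c + 1) * x := by ring

lemma inj_pow_two_mod {g M : ℕ}
    (hord : 0 < orderOf (g : ZMod M)) {t1 t2 : ℕ}
    (h1 : 2 * t1 < orderOf (g : ZMod M)) (h2 : 2 * t2 < orderOf (g : ZMod M))
    (heq : g ^ (2 * t1) % M = g ^ (2 * t2) % M) : t1 = t2 := by
  have hmod : (g : ℕ) ^ (2 * t1) ≡ g ^ (2 * t2) [MOD M] := heq
  have hcast : (g : ZMod M) ^ (2 * t1) = (g : ZMod M) ^ (2 * t2) := by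
    have := (ZMod.natCast_eq_natCast_iff _ _ _).mpr hmod
    push_cast at this
    exact this
  have hfin : IsOfFinOrder (g : ZMod M) := orderOf_pos_iff.mp hord
  obtain ⟨u, hu⟩ := hfin.isUnit
  have hupow : u ^ (2 * t1) = u ^ (2 * t2) := Units.ext (by
    simpa [hu, Units.val_pow_eq_pow_val] using hcast)
  have := pow_eq_pow_iff_modEq.mp hupow
  have hou : orderOf u = orderOf (g : ZMod M) := by rw [← hu, orderOf_units]
  rw [hou] at this
  have := this.eq_of_lt_of_lt h1 h2
  omega

lemma sum_GC0_one {K : Type*} [Field K] (f : ℕ → K) (g M N : ℕ)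
    (hinj : ∀ t1 < N, ∀ t2 < N, g ^ (2*t1) % M = g ^ (2*t2) % M → t1 = t2) :
    ∑ x ∈ GC0 g 1 M N 1, f x = ∑ t ∈ Finset.range N, f (g ^ (2*t) % M) := by
  unfold GC0
  rw [Finset.sum_image]
  · rw [Finset.sum_product]
    simp
  · intro x hx y hy hxy
    simp only [Finset.mem_coe, Finset.mem_product, Finset.mem_range, Nat.lt_one_iff] at hx hy
    simp only [one_pow, mul_one] at hxy
    have := hinj x.1 hx.1 y.1 hy.1 hxy
    exact Prod.ext this (hx.2.trans hy.2.symm)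

lemma sum_H2Q_eq {K : Type*} [Field K] (β : K) (p q m n g j k : ℕ)
    (hc : 0 < p ^ m * q ^ (n - j))
    (hinj : ∀ t1 < q ^ (j-1) * (q-1) / 2, ∀ t2 < q ^ (j-1) * (q-1) / 2,
      g ^ (2*t1) % (2 * q ^ j) = g ^ (2*t2) % (2 * q ^ j) → t1 = t2) :
    ∑ t ∈ H2Q p q m n g 0 j, (β ^ k) ^ t
      = ∑ t ∈ Finset.range (q ^ (j-1) * (q-1) / 2),
          (β ^ (k * (p ^ m * q ^ (n - j)))) ^ (g ^ (2*t) % (2 * q ^ j)) := by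
  unfold H2Q scaled D2Q GC
  rw [if_pos rfl]
  rw [Finset.sum_image (fun x _ y _ hxy => Nat.eq_of_mul_eq_mul_left hc hxy)]
  rw [sum_GC0_one _ _ _ _ hinj]
  refine Finset.sum_congr rfl fun t _ => ?_
  rw [← pow_mul, ← pow_mul]
  ring_nf

lemma sum_DQ_eq {K : Type*} [Field K] (γ : K) (q g l : ℕ)
    (hinj : ∀ t1 < (q-1) / 2, ∀ t2 < (q-1) / 2,
      g ^ (2*t1) % q = g ^ (2*t2) % q → t1 = t2) :
    ∑ t ∈ DQ q g 0 1, γ ^ (l * t)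
      = ∑ t ∈ Finset.range ((q-1) / 2), γ ^ (l * (g ^ (2*t) % q)) := by
  unfold DQ GC
  rw [if_pos rfl]
  have h1 : q ^ (1-1) * (q-1) / 2 = (q-1)/2 := by norm_num
  have h2 : q ^ 1 = q := pow_one q
  rw [h1, h2, sum_GC0_one _ _ _ _ hinj]

lemma sum_q_units_zero {K : Type*} [Field K] (ζ : K) (q s u a w : ℕ) (hq : q.Prime)
    (hs : 2 ≤ s) (hζ : ζ ^ (q ^ s) = 1) (hω : ζ ^ (q ^ (s - 1)) ≠ 1)
    (hu : u ≡ 1 + w * q ^ (s - 1) [MOD q ^ s]) (hw : ¬ q ∣ w) (ha : ¬ q ∣ a) :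
    ∑ c ∈ Finset.range q, ζ ^ (u ^ c * a) = 0 := by
  haveI : Fact q.Prime := ⟨hq⟩
  have hq1 : q ^ (s - 1) * q = q ^ s := by
    rw [← pow_succ]
    congr 1
    omega
  set ω := ζ ^ (q ^ (s - 1)) with hωdef
  have hωq : ω ^ q = 1 := by rw [← pow_mul, hq1, hζ]
  have hordω : orderOf ω = q := orderOf_eq_prime hωq hω
  set z := ω ^ (w * a) with hzdef
  have hz1 : z ≠ 1 := by
    intro h
    have : q ∣ w * a := hordω ▸ orderOf_dvd_of_pow_eq_one h
    rcases (Nat.Prime.dvd_mul hq).mp this with h' | h'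
    · exact hw h'
    · exact ha h'
  have hzq : z ^ q = 1 := by rw [hzdef, ← pow_mul, mul_comm (w*a) q, pow_mul, hωq, one_pow]
  have hterm : ∀ c, ζ ^ (u ^ c * a) = ζ ^ a * z ^ c := by
    intro c
    have hbin : u ^ c ≡ 1 + c * (w * q ^ (s - 1)) [MOD q ^ s] := by
      have h2 : q ^ s ∣ (w * q ^ (s - 1)) ^ 2 := by
        have h0 : q ^ s ∣ (q ^ (s - 1)) ^ 2 := by
          rw [← pow_mul]
          exact pow_dvd_pow q (by omega)
        calc q ^ s ∣ (q ^ (s-1))^2 := h0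
          _ ∣ (w * q ^ (s-1))^2 := by rw [mul_pow]; exact dvd_mul_left _ _
      exact (hu.pow c).trans (binom_modEq' _ _ h2 c)
    have hmul : u ^ c * a ≡ a + q ^ (s - 1) * (w * a * c) [MOD q ^ s] := by
      calc u ^ c * a ≡ (1 + c * (w * q ^ (s-1))) * a [MOD q ^ s] := hbin.mul_right a
        _ = a + q ^ (s-1) * (w * a * c) := by ring
    rw [pow_eq_of_modEq' hζ hmul, pow_add, pow_mul, ← hωdef, pow_mul]
  calc ∑ c ∈ Finset.range q, ζ ^ (u ^ c * a) = ∑ c ∈ Finset.range q, ζ ^ a * z ^ c :=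
        Finset.sum_congr rfl fun c _ => hterm c
    _ = ζ ^ a * ((z ^ q - 1) / (z - 1)) := by rw [← Finset.mul_sum, geom_sum_eq hz1]
    _ = 0 := by rw [hzq]; simp

theorem statement8
    (p q m n g y : ℕ)
    (hp : p.Prime) (hq : q.Prime) (hpq : p ≠ q) (hpodd : Odd p) (hqodd : Odd q)
    (hm : 1 ≤ m) (hn : 1 ≤ n) (hgodd : Odd g)
    (hgp : ∀ i, 1 ≤ i → i ≤ m → orderOf (g : ZMod (p ^ i)) = Nat.totient (p ^ i))
    (hg2p : ∀ i, 1 ≤ i → i ≤ m → orderOf (g : ZMod (2 * p ^ i)) = Nat.totient (2 * p ^ i))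
    (hgq : ∀ j, 1 ≤ j → j ≤ n → orderOf (g : ZMod (q ^ j)) = Nat.totient (q ^ j))
    (hg2q : ∀ j, 1 ≤ j → j ≤ n → orderOf (g : ZMod (2 * q ^ j)) = Nat.totient (2 * q ^ j))
    (hylt : y < 2 * (p ^ m * q ^ n))
    (hyg : y ≡ g [MOD 2 * p ^ m]) (hy1 : y ≡ 1 [MOD 2 * q ^ n])
    (K : Type*) [Field K] [Fintype K]
    (hK : Fintype.card K = 4 ^ orderOf (4 : ZMod (p ^ m * q ^ n)))
    (β : K) (hβ : IsPrimitiveRoot β (p ^ m * q ^ n))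
    (A B l : ℕ) (hA : A ≤ m - 1) (hB : B ≤ n - 1) (hl : Nat.gcd l (p * q) = 1)
    : ∀ j, 1 ≤ j → j ≤ n →
      ((j ≤ B →
          ∑ t ∈ H2Q p q m n g 0 j, (β ^ (p ^ A * q ^ B * l)) ^ t
            = ((q ^ (j - 1) * (q - 1) / 2 : ℕ) : K)) ∧
        (j = B + 1 →
          ∑ t ∈ H2Q p q m n g 0 j, (β ^ (p ^ A * q ^ B * l)) ^ t
            = ∑ t ∈ DQ q g 0 1, (β ^ (p ^ (m + A) * q ^ (n - 1))) ^ (l * t)) ∧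
        (B + 1 < j →
          ∑ t ∈ H2Q p q m n g 0 j, (β ^ (p ^ A * q ^ B * l)) ^ t = 0)) := by
  intro j hj1 hjn
  -- basic numerics
  have hq2 : 2 ≤ q := hq.two_le
  obtain ⟨qh, hqh⟩ := hqodd
  have hq1even : 2 ∣ q - 1 := by omega
  have hqpos : 0 < q := hq.pos
  have hppos : 0 < p := hp.pos
  have hcpos : 0 < p ^ m * q ^ (n - j) := by positivity
  have hqjpos : 0 < q ^ j := by positivity
  -- coprimalities
  have hlq : Nat.Coprime l q := (Nat.Coprime.coprime_dvd_right (dvd_mul_left q p) hl)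
  have hgq' : Nat.Coprime g q := by
    haveI : NeZero (2 * q ^ j) := ⟨by omega⟩
    have hpos : 0 < orderOf (g : ZMod (2 * q ^ j)) := by
      rw [hg2q j hj1 hjn]
      exact Nat.totient_pos.mpr (by omega)
    have hunit : IsUnit (g : ZMod (2 * q ^ j)) := (orderOf_pos_iff.mp hpos).isUnit
    have hcop : Nat.Coprime g (2 * q ^ j) := (ZMod.isUnit_iff_coprime g _).mp hunit
    exact Nat.Coprime.coprime_dvd_right
      (dvd_mul_of_dvd_right (dvd_pow_self q (by omega)) 2) hcop
  -- char 2 facts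
  have h2K : (2 : K) = 0 := by
    have hdne : orderOf (4 : ZMod (p ^ m * q ^ n)) ≠ 0 := by
      intro h
      rw [h, pow_zero] at hK
      have := Fintype.one_lt_card (α := K)
      omega
    have hz : ((Fintype.card K : ℕ) : K) = 0 := FiniteField.cast_card_eq_zero K
    rw [hK] at hz
    push_cast at hz
    have h4 : (4 : K) = 0 := pow_eq_zero_iff hdne |>.mp hz
    have h22 : (2 : K) * (2 : K) = 4 := by norm_num
    exact mul_self_eq_zero.mp (by rw [h22]; exact h4)
  have hqK1 : (q : K) = 1 := by
    have : ((q : ℕ) : K) = 2 * (qh : K) + 1 := by rw [hqh]; push_cast; ring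
    rw [this, h2K]; ring
  -- totients and injectivity mod 2q^j
  have htot2q : Nat.totient (2 * q ^ j) = q ^ (j - 1) * (q - 1) := by
    have hc2 : Nat.Coprime 2 (q ^ j) :=
      Nat.Coprime.pow_right j ((Nat.coprime_primes Nat.prime_two hq).mpr (by omega))
    rw [Nat.totient_mul hc2, Nat.totient_two, one_mul, Nat.totient_prime_pow hq (by omega)]
  have hDeven : 2 ∣ q ^ (j - 1) * (q - 1) := hq1even.mul_left _
  have hD2 : 2 * (q ^ (j - 1) * (q - 1) / 2) = q ^ (j - 1) * (q - 1) :=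
    Nat.mul_div_cancel' hDeven
  have hinj2q : ∀ t1 < q ^ (j-1) * (q-1) / 2, ∀ t2 < q ^ (j-1) * (q-1) / 2,
      g ^ (2*t1) % (2 * q ^ j) = g ^ (2*t2) % (2 * q ^ j) → t1 = t2 := by
    intro t1 ht1 t2 ht2 heq
    have hord := hg2q j hj1 hjn
    refine inj_pow_two_mod ?_ ?_ ?_ heq <;> rw [hord, htot2q]
    · omega
    · omega
    · omega
  -- the LHS reduction
  have hLHS : ∑ t ∈ H2Q p q m n g 0 j, (β ^ (p ^ A * q ^ B * l)) ^ t
      = ∑ t ∈ Finset.range (q ^ (j-1) * (q-1) / 2),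
          (β ^ (p ^ A * q ^ B * l * (p ^ m * q ^ (n - j)))) ^ (g ^ (2*t) % (2 * q ^ j)) :=
    sum_H2Q_eq β p q m n g j (p ^ A * q ^ B * l) hcpos hinj2q
  have hζM : (β ^ (p ^ A * q ^ B * l * (p ^ m * q ^ (n - j)))) ^ (2 * q ^ j) = 1 := by
    rw [← pow_mul]
    refine (hβ.pow_eq_one_iff_dvd _).mpr ⟨2 * (p ^ A * q ^ B * l), ?_⟩
    have hqnj : q ^ (n - j) * q ^ j = q ^ n := by rw [← pow_add]; congr 1; omega
    calc p ^ A * q ^ B * l * (p ^ m * q ^ (n - j)) * (2 * q ^ j)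
        = (q ^ (n-j) * q ^ j) * (2 * (p ^ A * q ^ B * l)) * p ^ m := by ring
      _ = q ^ n * (2 * (p ^ A * q ^ B * l)) * p ^ m := by rw [hqnj]
      _ = p ^ m * q ^ n * (2 * (p ^ A * q ^ B * l)) := by ring
  refine ⟨fun hjB => ?_, fun hjB => ?_, fun hjB => ?_⟩
  -- Case 1 : j ≤ B
  · have hζ1 : β ^ (p ^ A * q ^ B * l * (p ^ m * q ^ (n - j))) = 1 := by
      refine (hβ.pow_eq_one_iff_dvd _).mpr ⟨p ^ A * q ^ (B - j) * l, ?_⟩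
      have e1 : q ^ B * q ^ (n - j) = q ^ n * q ^ (B - j) := by
        rw [← pow_add, ← pow_add]; congr 1; omega
      calc p ^ A * q ^ B * l * (p ^ m * q ^ (n - j))
          = (q ^ B * q ^ (n - j)) * (p ^ A * p ^ m * l) := by ring
        _ = (q ^ n * q ^ (B - j)) * (p ^ A * p ^ m * l) := by rw [e1]
        _ = p ^ m * q ^ n * (p ^ A * q ^ (B - j) * l) := by ring
    rw [hLHS]
    simp [hζ1]
  -- Case 2 : j = B + 1
  · subst hjB
    have hBn : B + 1 ≤ n := hjn
    have hkc : p ^ A * q ^ B * l * (p ^ m * q ^ (n - (B+1))) = p ^ (m + A) * q ^ (n - 1) * l := by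
      have e2 : q ^ B * q ^ (n - (B+1)) = q ^ (n - 1) := by
        rw [← pow_add]; congr 1; omega
      calc p ^ A * q ^ B * l * (p ^ m * q ^ (n - (B+1)))
          = (q ^ B * q ^ (n - (B+1))) * (p ^ A * p ^ m * l) := by ring
        _ = q ^ (n - 1) * (p ^ A * p ^ m * l) := by rw [e2]
        _ = p ^ (m + A) * q ^ (n - 1) * l := by rw [pow_add]; ring
    have hζq : (β ^ (p ^ A * q ^ B * l * (p ^ m * q ^ (n - (B+1))))) ^ q = 1 := by
      rw [← pow_mul, hkc]
      refine (hβ.pow_eq_one_iff_dvd _).mpr ⟨p ^ A * l, ?_⟩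
      have e3 : q ^ (n - 1) * q = q ^ n := by
        rw [← pow_succ]; congr 1; omega
      calc p ^ (m + A) * q ^ (n - 1) * l * q
          = (q ^ (n - 1) * q) * (p ^ (m + A) * l) := by ring
        _ = q ^ n * (p ^ (m + A) * l) := by rw [e3]
        _ = p ^ m * q ^ n * (p ^ A * l) := by rw [pow_add]; ring
    -- Fermat for modulus q
    have hgfermat : g ^ (q - 1) ≡ 1 [MOD q] := by
      have := Nat.ModEq.pow_totient hgq'
      rwa [Nat.totient_prime hq] at this
    -- injectivity mod q
    have hinjq : ∀ t1 < (q-1) / 2, ∀ t2 < (q-1) / 2,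
        g ^ (2*t1) % q = g ^ (2*t2) % q → t1 = t2 := by
      intro t1 ht1 t2 ht2 heq
      have hord := hgq 1 le_rfl hn
      rw [pow_one] at hord
      have htotq : Nat.totient q = q - 1 := Nat.totient_prime hq
      refine inj_pow_two_mod ?_ ?_ ?_ heq <;> rw [hord, htotq]
      · omega
      · omega
      · omega
    have hterm : ∀ c r, (β ^ (p ^ A * q ^ B * l * (p ^ m * q ^ (n - (B+1)))))
          ^ (g ^ (2*(c * ((q-1)/2) + r)) % (2 * q ^ (B+1)))
        = (β ^ (p ^ A * q ^ B * l * (p ^ m * q ^ (n - (B+1))))) ^ (g ^ (2*r) % q) := by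
      intro c r
      rw [pow_mod_eq_pow' hζM, pow_mod_eq_pow' hζq]
      refine pow_eq_of_modEq' hζq ?_
      have hx : g ^ (2*(c * ((q-1)/2) + r)) = (g ^ (q-1)) ^ c * g ^ (2*r) := by
        rw [← pow_mul, ← pow_add]
        have h2c : 2 * ((q-1)/2) = q - 1 := Nat.mul_div_cancel' hq1even
        have : 2*(c * ((q-1)/2) + r) = (q-1) * c + 2*r := by
          calc 2*(c * ((q-1)/2) + r) = (2 * ((q-1)/2)) * c + 2*r := by ring
            _ = (q-1) * c + 2*r := by rw [h2c]
        rw [this]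
      rw [hx]
      calc (g ^ (q-1)) ^ c * g ^ (2*r) ≡ 1 ^ c * g ^ (2*r) [MOD q] :=
            (hgfermat.pow c).mul_right _
        _ = g ^ (2*r) := by rw [one_pow, one_mul]
    have hNsplit : q ^ (B + 1 - 1) * (q - 1) / 2 = q ^ B * ((q - 1) / 2) := by
      rw [Nat.add_sub_cancel, Nat.mul_div_assoc _ hq1even]
    rw [hLHS, hNsplit, sum_range_mul_split]
    calc ∑ c ∈ Finset.range (q ^ B), ∑ r ∈ Finset.range ((q-1)/2),
            (β ^ (p ^ A * q ^ B * l * (p ^ m * q ^ (n - (B+1)))))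
              ^ (g ^ (2*(c * ((q-1)/2) + r)) % (2 * q ^ (B+1)))
        = ∑ c ∈ Finset.range (q ^ B), ∑ r ∈ Finset.range ((q-1)/2),
            (β ^ (p ^ A * q ^ B * l * (p ^ m * q ^ (n - (B+1))))) ^ (g ^ (2*r) % q) :=
          Finset.sum_congr rfl fun c _ => Finset.sum_congr rfl fun r _ => hterm c r
      _ = (q ^ B) • ∑ r ∈ Finset.range ((q-1)/2),
            (β ^ (p ^ A * q ^ B * l * (p ^ m * q ^ (n - (B+1))))) ^ (g ^ (2*r) % q) := by
          rw [Finset.sum_const, Finset.card_range]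
      _ = ∑ r ∈ Finset.range ((q-1)/2),
            (β ^ (p ^ A * q ^ B * l * (p ^ m * q ^ (n - (B+1))))) ^ (g ^ (2*r) % q) := by
          rw [nsmul_eq_mul]
          push_cast
          rw [hqK1, one_pow, one_mul]
      _ = ∑ t ∈ DQ q g 0 1, (β ^ (p ^ (m + A) * q ^ (n - 1))) ^ (l * t) := by
          rw [sum_DQ_eq _ q g l hinjq]
          refine Finset.sum_congr rfl fun r _ => ?_
          rw [← pow_mul, ← pow_mul, hkc]
          ring_nf
  -- Case 3 : B + 1 < j
  · obtain ⟨D, rfl⟩ : ∃ D, j = B + 2 + D := ⟨j - B - 2, by omega⟩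
    have hjn' : B + 2 + D ≤ n := hjn
    have h2P' : 2 * (q ^ D * (q - 1) / 2) = q ^ D * (q - 1) :=
      Nat.mul_div_cancel' (hq1even.mul_left _)
    have hQ : (β ^ (p ^ A * q ^ B * l * (p ^ m * q ^ (n - (B+2+D))))) ^ (q ^ (2 + D)) = 1 := by
      rw [← pow_mul]
      refine (hβ.pow_eq_one_iff_dvd _).mpr ⟨p ^ A * l, ?_⟩
      have e5 : q ^ B * q ^ (n - (B+2+D)) * q ^ (2+D) = q ^ n := by
        rw [← pow_add, ← pow_add]; congr 1; omega
      calc p ^ A * q ^ B * l * (p ^ m * q ^ (n - (B+2+D))) * q ^ (2+D)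
          = (q ^ B * q ^ (n - (B+2+D)) * q ^ (2+D)) * (p ^ A * p ^ m * l) := by ring
        _ = q ^ n * (p ^ A * p ^ m * l) := by rw [e5]
        _ = p ^ m * q ^ n * (p ^ A * l) := by ring
    have hω : (β ^ (p ^ A * q ^ B * l * (p ^ m * q ^ (n - (B+2+D))))) ^ (q ^ (1 + D)) ≠ 1 := by
      intro h
      rw [← pow_mul] at h
      have hdvd := (hβ.pow_eq_one_iff_dvd _).mp h
      have e6 : q ^ B * q ^ (n - (B+2+D)) * q ^ (1+D) = q ^ (n-1) := by
        rw [← pow_add, ← pow_add]; congr 1; omega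
      have hrw : p ^ A * q ^ B * l * (p ^ m * q ^ (n - (B+2+D))) * q ^ (1+D)
          = q ^ (n-1) * (p ^ A * p ^ m * l) := by
        calc p ^ A * q ^ B * l * (p ^ m * q ^ (n - (B+2+D))) * q ^ (1+D)
            = (q ^ B * q ^ (n - (B+2+D)) * q ^ (1+D)) * (p ^ A * p ^ m * l) := by ring
          _ = q ^ (n-1) * (p ^ A * p ^ m * l) := by rw [e6]
      rw [hrw] at hdvd
      have hqn : q ^ n ∣ q ^ (n-1) * (p ^ A * p ^ m * l) :=
        dvd_trans (dvd_mul_left _ _) hdvd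
      have e7 : q ^ (n-1) * q = q ^ n := by rw [← pow_succ]; congr 1; omega
      rw [← e7] at hqn
      have hql : q ∣ p ^ A * p ^ m * l :=
        (mul_dvd_mul_iff_left (pow_ne_zero (n-1) (by omega : q ≠ 0))).mp hqn
      rcases (Nat.Prime.dvd_mul hq).mp hql with h' | h'
      · rcases (Nat.Prime.dvd_mul hq).mp h' with h'' | h''
        · exact hpq ((Nat.prime_dvd_prime_iff_eq hq hp).mp (hq.dvd_of_dvd_pow h'')).symm
        · exact hpq ((Nat.prime_dvd_prime_iff_eq hq hp).mp (hq.dvd_of_dvd_pow h'')).symm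
      · exact (Nat.Prime.coprime_iff_not_dvd hq).mp hlq.symm h'
    -- the unit u = g^(2 P') and its expansion 1 + w q^(1+D)
    have hdvd12 : q ^ (1+D) ∣ q ^ (2+D) := pow_dvd_pow q (by omega)
    have hq1Dgt : 1 < q ^ (1+D) := Nat.one_lt_pow (by omega) hq2
    have hu1 : g ^ (2 * (q ^ D * (q - 1) / 2)) ≡ 1 [MOD q ^ (1+D)] := by
      have htot : Nat.totient (q ^ (1+D)) = 2 * (q ^ D * (q - 1) / 2) := by
        rw [Nat.totient_prime_pow hq (by omega), h2P', show 1+D-1 = D from by omega]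
      have := Nat.ModEq.pow_totient (hgq'.pow_right (1+D))
      rwa [htot] at this
    have hune : ¬ (g ^ (2 * (q ^ D * (q - 1) / 2)) ≡ 1 [MOD q ^ (2+D)]) := by
      intro h
      have hcast : (g : ZMod (q ^ (2+D))) ^ (2 * (q ^ D * (q - 1) / 2)) = 1 := by
        have := (ZMod.natCast_eq_natCast_iff _ _ _).mpr h
        push_cast at this
        exact this
      have hdvd := orderOf_dvd_of_pow_eq_one hcast
      rw [hgq (2+D) (by omega) (by omega), Nat.totient_prime_pow hq (by omega), h2P'] at hdvd
      have hle := Nat.le_of_dvd (Nat.mul_pos (by positivity) (by omega)) hdvd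
      have h1D : q ^ (2+D-1) = q * q ^ D := by
        rw [show 2+D-1 = 1+D from by omega, pow_add, pow_one]
      rw [h1D] at hle
      have hle2 : q * q ^ D ≤ q ^ D := Nat.le_of_mul_le_mul_right hle (by omega)
      have : 2 * q ^ D ≤ q * q ^ D := Nat.mul_le_mul_right _ hq2
      have hqD : 0 < q ^ D := by positivity
      omega
    have hvmod : (g ^ (2 * (q ^ D * (q - 1) / 2)) % q ^ (2+D)) % q ^ (1+D) = 1 := by
      rw [Nat.mod_mod_of_dvd _ hdvd12]
      have hone : (1:ℕ) % q ^ (1+D) = 1 := Nat.mod_eq_of_lt hq1Dgt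
      calc g ^ (2 * (q ^ D * (q - 1) / 2)) % q ^ (1+D) = 1 % q ^ (1+D) := hu1
        _ = 1 := hone
    set v := g ^ (2 * (q ^ D * (q - 1) / 2)) % q ^ (2+D) with hvdef
    set w := v / q ^ (1+D) with hwdef
    have hveq : v = 1 + w * q ^ (1+D) := by
      have h0 : q ^ (1+D) * (v / q ^ (1+D)) + v % q ^ (1+D) = v := Nat.div_add_mod v _
      rw [hvmod, ← hwdef] at h0
      rw [← h0]; ring
    have huv : g ^ (2 * (q ^ D * (q - 1) / 2)) ≡ 1 + w * q ^ (1+D) [MOD q ^ (2+D)] := by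
      have h1 : g ^ (2 * (q ^ D * (q - 1) / 2)) ≡ v [MOD q ^ (2+D)] :=
        (Nat.mod_modEq _ _).symm
      rwa [hveq] at h1
    have hwnd : ¬ q ∣ w := by
      rintro ⟨w', hw'⟩
      apply hune
      rw [hw'] at huv
      refine huv.trans ?_
      have hqq : q * w' * q ^ (1+D) = q ^ (2+D) * w' := by
        rw [show (2+D) = 1+(1+D) from by omega, pow_add, pow_one]
        ring
      have : (1:ℕ) + q * w' * q ^ (1+D) ≡ 1 + q ^ (2+D) * w' [MOD q ^ (2+D)] := by
        rw [hqq]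
      refine this.trans ?_
      have : (1:ℕ) + q ^ (2+D) * w' ≡ 1 + 0 [MOD q ^ (2+D)] :=
        Nat.ModEq.add_left 1 ((Nat.modEq_zero_iff_dvd).mpr ⟨w', rfl⟩)
      simpa using this
    have hEuler2 : g ^ (2 * (q ^ D * (q - 1) / 2) * q) ≡ 1 [MOD q ^ (2+D)] := by
      have htot : Nat.totient (q ^ (2+D)) = 2 * (q ^ D * (q - 1) / 2) * q := by
        rw [Nat.totient_prime_pow hq (by omega), h2P',
          show 2+D-1 = 1+D from by omega, pow_add, pow_one]
        ring
      have := Nat.ModEq.pow_totient (hgq'.pow_right (2+D))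
      rwa [htot] at this
    have hNsplit : q ^ (B + 2 + D - 1) * (q - 1) / 2
        = (q ^ B * q) * (q ^ D * (q - 1) / 2) := by
      have h2d : 2 ∣ q ^ D * (q - 1) := hq1even.mul_left _
      rw [← Nat.mul_div_assoc _ h2d]
      congr 1
      have e4 : q ^ (B + 2 + D - 1) = q ^ B * q ^ 1 * q ^ D := by
        rw [← pow_add, ← pow_add]; congr 1; omega
      rw [e4, pow_one]
      ring
    rw [hLHS, hNsplit, sum_range_mul_split, sum_range_mul_split
      (fun c => ∑ r ∈ Finset.range (q ^ D * (q - 1) / 2),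
        (β ^ (p ^ A * q ^ B * l * (p ^ m * q ^ (n - (B+2+D)))))
          ^ (g ^ (2*(c * (q ^ D * (q - 1) / 2) + r)) % (2 * q ^ (B+2+D))))]
    refine Finset.sum_eq_zero fun c1 _ => ?_
    rw [Finset.sum_comm]
    refine Finset.sum_eq_zero fun r _ => ?_
    have ha : ¬ q ∣ g ^ (2*r) := fun h =>
      (Nat.Prime.coprime_iff_not_dvd hq).mp hgq'.symm (hq.dvd_of_dvd_pow h)
    have hterm : ∀ c2, (β ^ (p ^ A * q ^ B * l * (p ^ m * q ^ (n - (B+2+D)))))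
          ^ (g ^ (2*((c1 * q + c2) * (q ^ D * (q - 1) / 2) + r)) % (2 * q ^ (B+2+D)))
        = (β ^ (p ^ A * q ^ B * l * (p ^ m * q ^ (n - (B+2+D)))))
          ^ ((g ^ (2 * (q ^ D * (q - 1) / 2))) ^ c2 * g ^ (2*r)) := by
      intro c2
      rw [pow_mod_eq_pow' hζM]
      refine pow_eq_of_modEq' hQ ?_
      have hx : g ^ (2*((c1 * q + c2) * (q ^ D * (q - 1) / 2) + r))
          = (g ^ (2 * (q ^ D * (q - 1) / 2) * q)) ^ c1
            * ((g ^ (2 * (q ^ D * (q - 1) / 2))) ^ c2 * g ^ (2*r)) := by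
        rw [← pow_mul, ← pow_mul, ← pow_add, ← pow_add]
        congr 1
        ring
      rw [hx]
      calc (g ^ (2 * (q ^ D * (q - 1) / 2) * q)) ^ c1
            * ((g ^ (2 * (q ^ D * (q - 1) / 2))) ^ c2 * g ^ (2*r))
          ≡ 1 ^ c1 * ((g ^ (2 * (q ^ D * (q - 1) / 2))) ^ c2 * g ^ (2*r)) [MOD q ^ (2+D)] :=
            (hEuler2.pow c1).mul_right _
        _ = (g ^ (2 * (q ^ D * (q - 1) / 2))) ^ c2 * g ^ (2*r) := by rw [one_pow, one_mul]
    calc ∑ c2 ∈ Finset.range q, (β ^ (p ^ A * q ^ B * l * (p ^ m * q ^ (n - (B+2+D)))))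
            ^ (g ^ (2*((c1 * q + c2) * (q ^ D * (q - 1) / 2) + r)) % (2 * q ^ (B+2+D)))
        = ∑ c2 ∈ Finset.range q, (β ^ (p ^ A * q ^ B * l * (p ^ m * q ^ (n - (B+2+D)))))
            ^ ((g ^ (2 * (q ^ D * (q - 1) / 2))) ^ c2 * g ^ (2*r)) :=
          Finset.sum_congr rfl fun c2 _ => hterm c2
      _ = 0 := by
          refine sum_q_units_zero _ q (2+D) _ _ w hq (by omega) hQ ?_ ?_ hwnd ha
          · rwa [show 2+D-1 = 1+D from by omega]
          · rwa [show 2+D-1 = 1+D from by omega]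


end
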